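/- For all τ ∈ ℝ, −(1/π) ∫₀^∞ sinc²(ω/4) sin²(ω/4) sin(ωτ) dω = (1/π) [ 6τ ln|τ| + (τ+1) ln|τ+1| + (τ−1) ln|τ−1| − 4(τ+1/2) ln|τ+1/2| − 4(τ−1/2) ln|τ−1/2| ], where sinc(u) = sin(u)/u (with sinc(0)=1) and the convention 0·ln 0 = 0 is used. -/

import Mathlib

open MeasureTheory Real

noncomputable def sinc (u : ℝ) : ℝ := if u = 0 then 1 else Real.sin u / u

section HaarAux
open Set Filter Function

noncomputable def haarG (a x : ℝ) : ℝ := (Real.sin (a * x) - a * Real.sin x) / x ^ 2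

noncomputable def haarF (a x t : ℝ) : ℝ :=
  (Real.sin (a * x) - a * Real.sin x) * (t * Real.exp (-(x * t)))

open MeasureTheory Real Set Filter

lemma abs_sin_sub_le (t : ℝ) : |Real.sin t - t| ≤ 2 * t ^ 2 := by
  have key : ∀ s : ℝ, 0 ≤ s → |Real.sin s - s| ≤ 2 * s ^ 2 := by
    intro s hs
    rcases le_total s 1 with h1 | h1
    · rcases eq_or_lt_of_le hs with rfl | hs'
      · simp
      · have hu : Real.sin s < s := Real.sin_lt hs'
        have hl : s - s ^ 3 / 4 < Real.sin s := by have := Real.sin_gt_sub_cube hs'; have : 0 < s ^ 3 := pow_pos hs' 3; linarith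
        rw [abs_sub_comm, abs_of_pos (by linarith)]
        nlinarith
    · have h2 : Real.sin s ≤ 1 := Real.sin_le_one s
      have h3 : -1 ≤ Real.sin s := Real.neg_one_le_sin s
      rw [abs_le]
      constructor <;> nlinarith
  rcases le_total 0 t with h | h
  · exact key t h
  · have h2 := key (-t) (by linarith)
    rw [neg_sq] at h2
    have e : Real.sin t - t = -(Real.sin (-t) - -t) := by rw [Real.sin_neg]; ring
    rw [e, abs_neg]; exact h2

/-- numerator bound -/
lemma num_bound (a x : ℝ) : |Real.sin (a * x) - a * Real.sin x| ≤ (2 * a ^ 2 + 2 * |a|) * x ^ 2 := by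
  have h1 := abs_sin_sub_le (a * x)
  have h2 := abs_sin_sub_le x
  calc |Real.sin (a * x) - a * Real.sin x|
      = |(Real.sin (a * x) - a * x) + a * (x - Real.sin x)| := by ring_nf
    _ ≤ |Real.sin (a * x) - a * x| + |a * (x - Real.sin x)| := abs_add_le _ _
    _ ≤ 2 * (a * x) ^ 2 + |a| * (2 * x ^ 2) := by
        refine add_le_add h1 ?_
        rw [abs_mul]
        exact mul_le_mul_of_nonneg_left (by rw [abs_sub_comm]; exact h2) (abs_nonneg a)
    _ = (2 * a ^ 2 + 2 * |a|) * x ^ 2 := by ring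



lemma haarG_integrable (a : ℝ) : IntegrableOn (haarG a) (Ioi (0:ℝ)) := by
  have hmeas : ∀ s : Set ℝ, AEStronglyMeasurable (haarG a) (volume.restrict s) := by
    intro s
    apply Measurable.aestronglyMeasurable
    unfold haarG
    fun_prop
  have : Ioi (0:ℝ) = Ioc 0 1 ∪ Ioi 1 := (Ioc_union_Ioi_eq_Ioi zero_le_one).symm
  rw [this]
  apply IntegrableOn.union
  · -- bounded on Ioc 0 1
    apply Integrable.mono' (g := fun _ : ℝ => 2 * a ^ 2 + 2 * |a|)
    · exact integrable_const _
    · exact hmeas _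
    · filter_upwards [ae_restrict_mem measurableSet_Ioc] with x hx
      have hx0 : 0 < x := hx.1
      have hb := num_bound a x
      rw [Real.norm_eq_abs]
      unfold haarG
      rw [abs_div, abs_of_pos (by positivity : (0:ℝ) < x ^ 2)]
      rw [div_le_iff₀ (by positivity)]
      calc |Real.sin (a * x) - a * Real.sin x| ≤ (2 * a ^ 2 + 2 * |a|) * x ^ 2 := hb
        _ = (2 * a ^ 2 + 2 * |a|) * x ^ 2 := rfl
  · apply Integrable.mono' (g := fun x : ℝ => (1 + |a|) * x ^ (-2 : ℝ))
    · exact (integrableOn_Ioi_rpow_of_lt (by norm_num) one_pos).const_mul _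
    · exact hmeas _
    · filter_upwards [ae_restrict_mem measurableSet_Ioi] with x hx
      have hx1 : (1:ℝ) < x := hx
      have hx0 : (0:ℝ) < x := lt_trans one_pos hx1
      rw [Real.norm_eq_abs]
      unfold haarG
      rw [abs_div, abs_of_pos (by positivity : (0:ℝ) < x ^ 2)]
      rw [Real.rpow_neg hx0.le, div_le_iff₀ (by positivity)]
      have h1 : |Real.sin (a * x) - a * Real.sin x| ≤ 1 + |a| := by
        calc |Real.sin (a * x) - a * Real.sin x| ≤ |Real.sin (a * x)| + |a * Real.sin x| := abs_sub _ _
          _ ≤ 1 + |a| * 1 := by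
              refine add_le_add (abs_le.mpr ⟨Real.neg_one_le_sin _, Real.sin_le_one _⟩) ?_
              rw [abs_mul]
              exact mul_le_mul_of_nonneg_left
                (abs_le.mpr ⟨Real.neg_one_le_sin _, Real.sin_le_one _⟩) (abs_nonneg a)
          _ = 1 + |a| := by ring
      calc |Real.sin (a * x) - a * Real.sin x| ≤ 1 + |a| := h1
        _ = (1 + |a|) * (x ^ (2:ℝ))⁻¹ * x ^ 2 := by
            have h2 : x ^ (2:ℝ) = x ^ 2 := by
              rw [← Real.rpow_natCast x 2]; norm_num
            rw [h2]; field_simp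

lemma texp_eval {x : ℝ} (hx : 0 < x) :
    IntegrableOn (fun t => t * Real.exp (-(x * t))) (Ioi (0:ℝ)) ∧
    ∫ t in Ioi (0:ℝ), t * Real.exp (-(x * t)) = 1 / x ^ 2 := by
  set G : ℝ → ℝ := fun t => -((x * t * Real.exp (-(x * t)) + Real.exp (-(x * t))) / x ^ 2) with hG
  have hderiv : ∀ t ∈ Ici (0:ℝ), HasDerivAt G (t * Real.exp (-(x * t))) t := by
    intro t _
    have he : HasDerivAt (fun t : ℝ => -(x * t)) (-x) t := by
      simpa using ((hasDerivAt_id t).const_mul x).fun_neg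
    have hexp : HasDerivAt (fun t : ℝ => Real.exp (-(x * t)))
        (Real.exp (-(x * t)) * -x) t := he.exp
    have hlin : HasDerivAt (fun t : ℝ => x * t) x t := by
      simpa using (hasDerivAt_id t).const_mul x
    have hmul := hlin.mul hexp
    have h := ((hmul.add hexp).div_const (x ^ 2)).neg
    refine h.congr_deriv (Eq.symm ?_)
    field_simp
    ring
  have htends : Tendsto G atTop (nhds 0) := by
    have hf : Tendsto (fun s : ℝ => s * Real.exp (-s) + Real.exp (-s)) atTop (nhds 0) := by
      have h1 := Real.tendsto_pow_mul_exp_neg_atTop_nhds_zero 1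
      simp only [pow_one] at h1
      simpa using h1.add Real.tendsto_exp_neg_atTop_nhds_zero
    have hxt : Tendsto (fun t : ℝ => x * t) atTop atTop :=
      Tendsto.const_mul_atTop hx tendsto_id
    have h2 := (hf.comp hxt).neg.div_const (x ^ 2)
    refine Tendsto.congr (fun t => ?_) (by simpa using h2)
    simp only [hG, Function.comp]
    ring
  have hpos : ∀ t ∈ Ioi (0:ℝ), 0 ≤ t * Real.exp (-(x * t)) := by
    intro t ht
    have : (0:ℝ) < t := ht
    positivity
  constructor
  · exact integrableOn_Ioi_deriv_of_nonneg' hderiv hpos htends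
  · rw [integral_Ioi_of_hasDerivAt_of_nonneg' hderiv hpos htends]
    simp [hG]

lemma xint_eval {t : ℝ} (ht : 0 < t) (a : ℝ) :
    IntegrableOn (fun x => Real.exp (-(t * x)) * (Real.sin (a * x) - a * Real.sin x)) (Ioi (0:ℝ)) ∧
    ∫ x in Ioi (0:ℝ), Real.exp (-(t * x)) * (Real.sin (a * x) - a * Real.sin x)
      = a / (t ^ 2 + a ^ 2) - a / (t ^ 2 + 1) := by
  have hd1 : (0:ℝ) < t ^ 2 + a ^ 2 := by positivity
  have hd2 : (0:ℝ) < t ^ 2 + 1 := by positivity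
  set u : ℝ → ℝ := fun x => (t * Real.sin (a * x) + a * Real.cos (a * x)) / (t ^ 2 + a ^ 2)
      - a * (t * Real.sin x + Real.cos x) / (t ^ 2 + 1) with hu
  set F : ℝ → ℝ := fun x => -(Real.exp (-(t * x)) * u x) with hF
  have hderiv : ∀ x ∈ Ici (0:ℝ),
      HasDerivAt F (Real.exp (-(t * x)) * (Real.sin (a * x) - a * Real.sin x)) x := by
    intro x _
    have he : HasDerivAt (fun x : ℝ => -(t * x)) (-t) x := by
      simpa using ((hasDerivAt_id x).const_mul t).fun_neg
    have hexp : HasDerivAt (fun x : ℝ => Real.exp (-(t * x)))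
        (Real.exp (-(t * x)) * -t) x := he.exp
    have hax : HasDerivAt (fun x : ℝ => a * x) a x := by
      simpa using (hasDerivAt_id x).const_mul a
    have hsinax : HasDerivAt (fun x : ℝ => Real.sin (a * x)) (Real.cos (a * x) * a) x := hax.sin
    have hcosax : HasDerivAt (fun x : ℝ => Real.cos (a * x)) (-Real.sin (a * x) * a) x := hax.cos
    have hsin : HasDerivAt Real.sin (Real.cos x) x := Real.hasDerivAt_sin x
    have hcos : HasDerivAt Real.cos (-Real.sin x) x := Real.hasDerivAt_cos x
    have hu' : HasDerivAt u
        ((t * (Real.cos (a * x) * a) + a * (-Real.sin (a * x) * a)) / (t ^ 2 + a ^ 2)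
         - a * (t * Real.cos x + -Real.sin x) / (t ^ 2 + 1)) x := by
      exact ((((hsinax.const_mul t).add (hcosax.const_mul a)).div_const _).sub
        (((hsin.const_mul t).add hcos).const_mul a |>.div_const _))
    have h := (hexp.mul hu').neg
    have key : ∀ E S C Sx Cx : ℝ,
        -(E * -t * ((t*S + a*C)/(t^2+a^2) - a*(t*Sx + Cx)/(t^2+1)) +
          E * ((t*(C*a) + a*(-S*a))/(t^2+a^2) - a*(t*Cx + -Sx)/(t^2+1))) = E * (S - a * Sx) := by
      intro E S C Sx Cx
      field_simp
      ring
    refine h.congr_deriv (Eq.symm ?_)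
    simp only [hu]
    exact (key (Real.exp (-(t*x))) (Real.sin (a*x)) (Real.cos (a*x)) (Real.sin x) (Real.cos x)).symm
  have hbound : ∀ x : ℝ, ‖F x‖ ≤ ((t + |a|) / (t ^ 2 + a ^ 2) + |a| * (t + 1) / (t ^ 2 + 1)) * Real.exp (-(t * x)) := by
    intro x
    have hub : |u x| ≤ (t + |a|) / (t ^ 2 + a ^ 2) + |a| * (t + 1) / (t ^ 2 + 1) := by
      have hs1 : |Real.sin (a * x)| ≤ 1 := abs_le.mpr ⟨Real.neg_one_le_sin _, Real.sin_le_one _⟩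
      have hc1 : |Real.cos (a * x)| ≤ 1 := abs_le.mpr ⟨Real.neg_one_le_cos _, Real.cos_le_one _⟩
      have hs2 : |Real.sin x| ≤ 1 := abs_le.mpr ⟨Real.neg_one_le_sin _, Real.sin_le_one _⟩
      have hc2 : |Real.cos x| ≤ 1 := abs_le.mpr ⟨Real.neg_one_le_cos _, Real.cos_le_one _⟩
      calc |u x| ≤ |(t * Real.sin (a * x) + a * Real.cos (a * x)) / (t ^ 2 + a ^ 2)|
            + |a * (t * Real.sin x + Real.cos x) / (t ^ 2 + 1)| := abs_sub _ _
        _ ≤ (t + |a|) / (t ^ 2 + a ^ 2) + |a| * (t + 1) / (t ^ 2 + 1) := by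
            rw [abs_div, abs_div, abs_of_pos hd1, abs_of_pos hd2]
            gcongr
            · calc |t * Real.sin (a * x) + a * Real.cos (a * x)|
                  ≤ |t * Real.sin (a * x)| + |a * Real.cos (a * x)| := abs_add_le _ _
                _ ≤ t + |a| := by
                    rw [abs_mul, abs_mul, abs_of_pos ht]
                    refine add_le_add ?_ ?_
                    · nlinarith [abs_nonneg (Real.sin (a*x))]
                    · nlinarith [abs_nonneg a, abs_nonneg (Real.cos (a*x))]
            · calc |a * (t * Real.sin x + Real.cos x)| = |a| * |t * Real.sin x + Real.cos x| := abs_mul _ _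
                _ ≤ |a| * (t + 1) := by
                    refine mul_le_mul_of_nonneg_left ?_ (abs_nonneg a)
                    calc |t * Real.sin x + Real.cos x| ≤ |t * Real.sin x| + |Real.cos x| := abs_add_le _ _
                      _ ≤ t + 1 := by
                          rw [abs_mul, abs_of_pos ht]
                          refine add_le_add ?_ hc2
                          nlinarith [abs_nonneg (Real.sin x)]
    have : ‖F x‖ = Real.exp (-(t * x)) * |u x| := by
      rw [hF]
      simp [Real.norm_eq_abs, abs_mul, abs_of_pos (Real.exp_pos _)]
    rw [this, mul_comm]
    exact mul_le_mul_of_nonneg_right hub (Real.exp_pos _).le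
  have htends : Tendsto F atTop (nhds 0) := by
    apply squeeze_zero_norm hbound
    have hxt : Tendsto (fun x : ℝ => t * x) atTop atTop := Tendsto.const_mul_atTop ht tendsto_id
    have := (Real.tendsto_exp_neg_atTop_nhds_zero.comp hxt).const_mul
      ((t + |a|) / (t ^ 2 + a ^ 2) + |a| * (t + 1) / (t ^ 2 + 1))
    simpa [Function.comp] using this
  have hint : IntegrableOn (fun x => Real.exp (-(t * x)) * (Real.sin (a * x) - a * Real.sin x)) (Ioi (0:ℝ)) := by
    apply Integrable.mono' (g := fun x : ℝ => (1 + |a|) * Real.exp (-(t * x)))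
    · simpa [neg_mul] using (exp_neg_integrableOn_Ioi 0 ht).const_mul (1 + |a|)
    · apply Measurable.aestronglyMeasurable; fun_prop
    · filter_upwards with x
      rw [Real.norm_eq_abs, abs_mul, abs_of_pos (Real.exp_pos _), mul_comm]
      rw [show (1 + |a|) * Real.exp (-(t*x)) = Real.exp (-(t*x)) * (1 + |a|) from mul_comm _ _] at *
      rw [mul_comm]
      refine mul_le_mul_of_nonneg_left ?_ (Real.exp_pos _).le
      calc |Real.sin (a * x) - a * Real.sin x| ≤ |Real.sin (a * x)| + |a * Real.sin x| := abs_sub _ _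
        _ ≤ 1 + |a| := by
            rw [abs_mul]
            refine add_le_add (abs_le.mpr ⟨Real.neg_one_le_sin _, Real.sin_le_one _⟩) ?_
            nlinarith [abs_nonneg a, abs_le.mpr ⟨Real.neg_one_le_sin x, Real.sin_le_one x⟩, abs_nonneg (Real.sin x)]
    
  refine ⟨hint, ?_⟩
  rw [integral_Ioi_of_hasDerivAt_of_tendsto' hderiv hint htends]
  simp [hF, hu]

lemma tint_eval {a : ℝ} (ha : 0 < a) :
    ∫ t in Ioi (0:ℝ), t * (a / (t ^ 2 + a ^ 2) - a / (t ^ 2 + 1)) = -(a * Real.log a) := by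
  set H : ℝ → ℝ := fun t => a / 2 * (Real.log (t ^ 2 + a ^ 2) - Real.log (t ^ 2 + 1)) with hH
  have hderiv : ∀ t ∈ Ici (0:ℝ), HasDerivAt H (t * (a / (t ^ 2 + a ^ 2) - a / (t ^ 2 + 1))) t := by
    intro t _
    have hd1 : (0:ℝ) < t ^ 2 + a ^ 2 := by positivity
    have hd2 : (0:ℝ) < t ^ 2 + 1 := by positivity
    have hp1 : HasDerivAt (fun t : ℝ => t ^ 2 + a ^ 2) (2 * t) t := by
      simpa using (hasDerivAt_pow 2 t).add_const (a ^ 2)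
    have hp2 : HasDerivAt (fun t : ℝ => t ^ 2 + 1) (2 * t) t := by
      simpa using (hasDerivAt_pow 2 t).add_const (1:ℝ)
    have h1 : HasDerivAt (fun t : ℝ => Real.log (t ^ 2 + a ^ 2)) (2 * t / (t ^ 2 + a ^ 2)) t :=
      hp1.log hd1.ne'
    have h2 : HasDerivAt (fun t : ℝ => Real.log (t ^ 2 + 1)) (2 * t / (t ^ 2 + 1)) t :=
      hp2.log hd2.ne'
    have h := (h1.sub h2).const_mul (a / 2)
    refine h.congr_deriv (Eq.symm ?_)
    field_simp
  have htends : Tendsto H atTop (nhds 0) := by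
    have hq : Tendsto (fun t : ℝ => (t ^ 2 + a ^ 2) / (t ^ 2 + 1)) atTop (nhds 1) := by
      have h0 : Tendsto (fun t : ℝ => (a ^ 2 - 1) / (t ^ 2 + 1)) atTop (nhds 0) :=
        Tendsto.div_atTop tendsto_const_nhds
          (tendsto_atTop_add_const_right _ 1 (tendsto_pow_atTop two_ne_zero))
      have := h0.const_add (1:ℝ)
      rw [add_zero] at this
      refine Tendsto.congr (fun t => ?_) this
      have hd2 : (0:ℝ) < t ^ 2 + 1 := by positivity
      field_simp
      ring
    have hlog : Tendsto (fun t : ℝ => Real.log ((t ^ 2 + a ^ 2) / (t ^ 2 + 1))) atTop (nhds 0) := by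
      have := (Real.continuousAt_log one_ne_zero).tendsto.comp hq
      simpa [Function.comp_def] using this
    have := hlog.const_mul (a / 2)
    rw [mul_zero] at this
    refine Tendsto.congr (fun t => ?_) this
    have hd1 : (0:ℝ) < t ^ 2 + a ^ 2 := by positivity
    have hd2 : (0:ℝ) < t ^ 2 + 1 := by positivity
    rw [hH, Real.log_div hd1.ne' hd2.ne']
  have hH0 : H 0 = a * Real.log a := by
    have : Real.log (0 ^ 2 + a ^ 2) = 2 * Real.log a := by
      norm_num
    simp [hH, this]
    ring
  rcases le_total a 1 with ha1 | ha1
  · have hnn : ∀ t ∈ Ioi (0:ℝ), 0 ≤ t * (a / (t ^ 2 + a ^ 2) - a / (t ^ 2 + 1)) := by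
      intro t ht
      have ht0 : (0:ℝ) < t := ht
      have h1 : a / (t ^ 2 + 1) ≤ a / (t ^ 2 + a ^ 2) :=
        div_le_div_of_nonneg_left ha.le (by nlinarith [sq_nonneg t, mul_pos ha ha]) (by nlinarith)
      exact mul_nonneg ht0.le (sub_nonneg.2 h1)
    rw [integral_Ioi_of_hasDerivAt_of_nonneg' hderiv hnn htends, hH0, zero_sub]
  · have hnp : ∀ t ∈ Ioi (0:ℝ), t * (a / (t ^ 2 + a ^ 2) - a / (t ^ 2 + 1)) ≤ 0 := by
      intro t ht
      have ht0 : (0:ℝ) < t := ht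
      have h1 : a / (t ^ 2 + a ^ 2) ≤ a / (t ^ 2 + 1) :=
        div_le_div_of_nonneg_left ha.le (by positivity) (by nlinarith)
      exact mul_nonpos_of_nonneg_of_nonpos ht0.le (sub_nonpos.2 h1)
    rw [integral_Ioi_of_hasDerivAt_of_nonpos' hderiv hnp htends, hH0, zero_sub]

lemma haarG_int_pos {a : ℝ} (ha : 0 < a) :
    ∫ x in Ioi (0:ℝ), haarG a x = -(a * Real.log a) := by
  have hFmeas : AEStronglyMeasurable (uncurry (haarF a))
      ((volume.restrict (Ioi (0:ℝ))).prod (volume.restrict (Ioi (0:ℝ)))) := by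
    apply Continuous.aestronglyMeasurable
    unfold Function.uncurry haarF
    fun_prop
  have hInt : Integrable (uncurry (haarF a))
      ((volume.restrict (Ioi (0:ℝ))).prod (volume.restrict (Ioi (0:ℝ)))) := by
    rw [integrable_prod_iff hFmeas]
    constructor
    · filter_upwards [ae_restrict_mem measurableSet_Ioi] with x hx
      have hx0 : (0:ℝ) < x := hx
      have h := (texp_eval hx0).1.const_mul (Real.sin (a * x) - a * Real.sin x)
      simpa only [Function.uncurry_apply_pair, haarF] using h
    · apply Integrable.congr ((haarG_integrable a).abs)
      filter_upwards [ae_restrict_mem measurableSet_Ioi] with x hx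
      have hx0 : (0:ℝ) < x := hx
      have h1 : EqOn (fun t => ‖uncurry (haarF a) (x, t)‖)
          (fun t => |Real.sin (a * x) - a * Real.sin x| * (t * Real.exp (-(x * t))))
          (Ioi (0:ℝ)) := by
        intro t ht
        have ht0 : (0:ℝ) < t := ht
        simp only [uncurry, haarF, norm_mul, Real.norm_eq_abs]
        rw [abs_of_pos ht0, abs_of_pos (Real.exp_pos _)]
      calc |haarG a x| = |Real.sin (a * x) - a * Real.sin x| * (1 / x ^ 2) := by
            unfold haarG
            rw [abs_div, abs_of_pos (by positivity : (0:ℝ) < x ^ 2)]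
            ring
        _ = ∫ t in Ioi (0:ℝ), |Real.sin (a * x) - a * Real.sin x| * (t * Real.exp (-(x * t))) := by
            rw [integral_const_mul, (texp_eval hx0).2]
        _ = ∫ t, ‖uncurry (haarF a) (x, t)‖ ∂(volume.restrict (Ioi (0:ℝ))) := by
            rw [setIntegral_congr_fun measurableSet_Ioi h1]
  have swap := integral_integral_swap hInt
  have hL : (∫ x in Ioi (0:ℝ), (∫ t in Ioi (0:ℝ), haarF a x t)) = ∫ x in Ioi (0:ℝ), haarG a x := by
    refine setIntegral_congr_fun measurableSet_Ioi fun x hx => ?_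
    have hx0 : (0:ℝ) < x := hx
    simp only [haarF]
    rw [integral_const_mul, (texp_eval hx0).2]
    unfold haarG
    ring
  have hR : (∫ t in Ioi (0:ℝ), (∫ x in Ioi (0:ℝ), haarF a x t)) = -(a * Real.log a) := by
    rw [show (∫ t in Ioi (0:ℝ), (∫ x in Ioi (0:ℝ), haarF a x t)) =
        ∫ t in Ioi (0:ℝ), t * (a / (t ^ 2 + a ^ 2) - a / (t ^ 2 + 1)) from ?_, tint_eval ha]
    refine setIntegral_congr_fun measurableSet_Ioi fun t ht => ?_
    have ht0 : (0:ℝ) < t := ht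
    have h2 : EqOn (fun x => haarF a x t)
        (fun x => t * (Real.exp (-(t * x)) * (Real.sin (a * x) - a * Real.sin x)))
        (Ioi (0:ℝ)) := by
      intro x _
      simp only [haarF]
      rw [show x * t = t * x from mul_comm x t]
      ring
    rw [setIntegral_congr_fun measurableSet_Ioi h2, integral_const_mul, (xint_eval ht0 a).2]
  rw [← hL, swap, hR]

lemma haarG_int (a : ℝ) : ∫ x in Ioi (0:ℝ), haarG a x = -(a * Real.log |a|) := by
  rcases lt_trichotomy a 0 with h | h | h
  · have hpos := haarG_int_pos (neg_pos.2 h)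
    have heq : ∀ x, haarG a x = -(haarG (-a) x) := by
      intro x
      unfold haarG
      rw [neg_mul, Real.sin_neg]
      ring
    calc ∫ x in Ioi (0:ℝ), haarG a x = ∫ x in Ioi (0:ℝ), -(haarG (-a) x) := by simp only [heq]
      _ = -∫ x in Ioi (0:ℝ), haarG (-a) x := integral_neg _
      _ = -(a * Real.log |a|) := by rw [hpos, abs_of_neg h]; ring
  · subst h; simp [haarG]
  · rw [haarG_int_pos h, abs_of_pos h]

lemma haar_trig (τ : ℝ) : Set.EqOn (fun ω => _root_.sinc (ω / 4) ^ 2 * Real.sin (ω / 4) ^ 2 * Real.sin (ω * τ))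
    (fun ω => 6 * haarG τ ω - 4 * haarG (τ + 1/2) ω - 4 * haarG (τ - 1/2) ω
      + haarG (τ + 1) ω + haarG (τ - 1) ω) (Ioi (0:ℝ)) := by
  intro ω hω
  have hω0 : (0:ℝ) < ω := hω
  have hne : ω / 4 ≠ 0 := by positivity
  simp only [_root_.sinc, haarG, if_neg hne]
  have hp := Real.sin_sq_add_cos_sq (ω/4)
  have e0 : Real.sin (ω * τ) = Real.sin (τ * ω) := by rw [mul_comm]
  have e1 : Real.sin ((τ + 1/2) * ω)
      = Real.sin (τ * ω) * Real.cos (ω/2) + Real.cos (τ * ω) * Real.sin (ω/2) := by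
    rw [show (τ + 1/2) * ω = τ * ω + ω/2 by ring, Real.sin_add]
  have e2 : Real.sin ((τ - 1/2) * ω)
      = Real.sin (τ * ω) * Real.cos (ω/2) - Real.cos (τ * ω) * Real.sin (ω/2) := by
    rw [show (τ - 1/2) * ω = τ * ω - ω/2 by ring, Real.sin_sub]
  have e3 : Real.sin ((τ + 1) * ω)
      = Real.sin (τ * ω) * Real.cos ω + Real.cos (τ * ω) * Real.sin ω := by
    rw [show (τ + 1) * ω = τ * ω + ω by ring, Real.sin_add]
  have e4 : Real.sin ((τ - 1) * ω)
      = Real.sin (τ * ω) * Real.cos ω - Real.cos (τ * ω) * Real.sin ω := by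
    rw [show (τ - 1) * ω = τ * ω - ω by ring, Real.sin_sub]
  have ecω : Real.cos ω = 1 - 2 * Real.sin (ω/2) ^ 2 := by
    have h := Real.cos_two_mul (ω/2)
    rw [show 2 * (ω/2) = ω by ring] at h
    have hp2 := Real.sin_sq_add_cos_sq (ω/2)
    linarith
  have ec2 : Real.cos (ω/2) = 1 - 2 * Real.sin (ω/4) ^ 2 := by
    have h := Real.cos_two_mul (ω/4)
    rw [show 2 * (ω/4) = ω/2 by ring] at h
    linarith
  have es2 : Real.sin (ω/2) = 2 * Real.sin (ω/4) * Real.cos (ω/4) := by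
    rw [show ω/2 = 2 * (ω/4) by ring, Real.sin_two_mul]
  rw [e0, e1, e2, e3, e4, ecω, ec2, es2]
  have hω2 : ω ^ 2 ≠ 0 := by positivity
  field_simp
  linear_combination (32 * Real.sin (ω/4) ^ 2 * Real.sin (ω * τ)) * hp

end HaarAux

/-- Closed form of the Haar wavelet/Hilbert transform cross-correlation:
`−(1/π)∫₀^∞ sinc²(ω/4) sin²(ω/4) sin(ωτ) dω
 = (1/π)[6τ ln|τ| + (τ+1)ln|τ+1| + (τ−1)ln|τ−1|
   − 4(τ+1/2)ln|τ+1/2| − 4(τ−1/2)ln|τ−1/2|]`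
(with the convention `0·ln 0 = 0`, automatic since `Real.log 0 = 0`). -/
theorem haar_crosscorr_closed_form :
    ∀ τ : ℝ,
      -(1 / π) * (∫ ω in Set.Ioi (0 : ℝ),
          _root_.sinc (ω / 4) ^ 2 * Real.sin (ω / 4) ^ 2 * Real.sin (ω * τ)) =
      (1 / π) * (6 * τ * Real.log |τ| + (τ + 1) * Real.log |τ + 1| +
        (τ - 1) * Real.log |τ - 1| - 4 * (τ + 1 / 2) * Real.log |τ + 1 / 2| -
        4 * (τ - 1 / 2) * Real.log |τ - 1 / 2|) := by
  intro τ
  have h1 := haarG_integrable τ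
  have h2 := haarG_integrable (τ + 1/2)
  have h3 := haarG_integrable (τ - 1/2)
  have h4 := haarG_integrable (τ + 1)
  have h5 := haarG_integrable (τ - 1)
  rw [MeasureTheory.setIntegral_congr_fun measurableSet_Ioi (haar_trig τ)]
  have hi1 : MeasureTheory.IntegrableOn (fun x => 6 * haarG τ x) (Set.Ioi 0) :=
    h1.const_mul 6
  have hi2 : MeasureTheory.IntegrableOn (fun x => 6 * haarG τ x - 4 * haarG (τ + 1/2) x)
      (Set.Ioi 0) := hi1.sub (h2.const_mul 4)
  have hi3 : MeasureTheory.IntegrableOn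
      (fun x => 6 * haarG τ x - 4 * haarG (τ + 1/2) x - 4 * haarG (τ - 1/2) x)
      (Set.Ioi 0) := hi2.sub (h3.const_mul 4)
  have hi4 : MeasureTheory.IntegrableOn
      (fun x => 6 * haarG τ x - 4 * haarG (τ + 1/2) x - 4 * haarG (τ - 1/2) x + haarG (τ + 1) x)
      (Set.Ioi 0) := hi3.add h4
  rw [MeasureTheory.integral_add hi4 h5, MeasureTheory.integral_add hi3 h4,
    MeasureTheory.integral_sub hi2 (h3.const_mul 4), MeasureTheory.integral_sub hi1 (h2.const_mul 4),
    MeasureTheory.integral_const_mul, MeasureTheory.integral_const_mul,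
    MeasureTheory.integral_const_mul,
    haarG_int τ, haarG_int (τ + 1/2), haarG_int (τ - 1/2), haarG_int (τ + 1), haarG_int (τ - 1)]
  ring
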